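/- Let k be a field, let f_1, ..., f_m ∈ k[x_1, ..., x_n] and let g ∈ k[x_1, ..., x_n] be a nonzero polynomial. Let y be a new variable and regard all these polynomials as elements of k[x_1, ..., x_n, y]. Then the transcendence degree over k of the set {f_1, ..., f_m, 1 − y·g} equals the transcendence degree over k of {f_1, ..., f_m} plus one. -/

import Mathlib

open MvPolynomial

section Aux

variable {k : Type*} [Field k] {n : ℕ}

/-- The algebra equivalence `k[x₁,…,xₙ,y] ≃ k[x₁,…,xₙ][y]` sending the *last* variable to the
polynomial variable. -/
noncomputable def lastEquiv (k : Type*) [Field k] (n : ℕ) :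
    MvPolynomial (Fin (n + 1)) k ≃ₐ[k] Polynomial (MvPolynomial (Fin n) k) :=
  (renameEquiv k (finRotate (n + 1))).trans (finSuccEquiv k n)

lemma lastEquiv_X_last : lastEquiv k n (X (Fin.last n)) = Polynomial.X := by
  simp [lastEquiv, finRotate_last, finSuccEquiv_X_zero]

lemma lastEquiv_rename (p : MvPolynomial (Fin n) k) :
    lastEquiv k n (rename (Fin.castSucc : Fin n → Fin (n + 1)) p) = Polynomial.C p := by
  have : (lastEquiv k n).toAlgHom.comp (rename (Fin.castSucc : Fin n → Fin (n + 1)))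
      = Polynomial.CAlgHom.comp (AlgHom.id k _) := by
    apply MvPolynomial.algHom_ext
    intro i
    simp only [AlgHom.coe_comp, Function.comp_apply, rename_X, AlgEquiv.toAlgHom_eq_coe,
      AlgHom.coe_coe, AlgHom.coe_id, id_eq, Polynomial.CAlgHom_apply]
    show lastEquiv k n (X (Fin.castSucc i)) = _
    have h1 : finRotate (n + 1) (Fin.castSucc i) = i.succ := by
      rw [finRotate_succ_apply, Fin.coeSucc_eq_succ]
    simp [lastEquiv, h1, finSuccEquiv_X_succ]
  simpa using congrArg (fun φ => φ p) this

lemma transcendental_one_sub {g : MvPolynomial (Fin n) k} (hg : g ≠ 0)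
    (S : Subalgebra k (MvPolynomial (Fin (n + 1)) k))
    (hS : S ≤ (rename (Fin.castSucc : Fin n → Fin (n + 1)) :
        MvPolynomial (Fin n) k →ₐ[k] MvPolynomial (Fin (n + 1)) k).range) :
    Transcendental S (1 - X (Fin.last n) * rename (Fin.castSucc : Fin n → Fin (n + 1)) g) := by
  refine Transcendental.of_tower_top_of_subalgebra_le hS ?_
  set φ : MvPolynomial (Fin n) k →ₐ[k] MvPolynomial (Fin (n + 1)) k :=
    rename (Fin.castSucc : Fin n → Fin (n + 1))
  -- the retraction sending the last variable to 0
  set τ : MvPolynomial (Fin (n + 1)) k →ₐ[k] MvPolynomial (Fin n) k :=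
    aeval (Fin.snoc X 0)
  have hτφ : ∀ p : MvPolynomial (Fin n) k, τ (φ p) = p := by
    intro p
    show (τ.comp φ) p = p
    have : τ.comp φ = AlgHom.id k _ := by
      apply MvPolynomial.algHom_ext
      intro i
      simp [τ, φ]
    rw [this]; rfl
  set f : φ.range →+* MvPolynomial (Fin n) k := τ.toRingHom.comp φ.range.val.toRingHom
  have hf : Function.Injective f := by
    rintro ⟨a, p, rfl⟩ ⟨b, q, rfl⟩ h
    simp only [f, RingHom.comp_apply] at h
    have : τ (φ p) = τ (φ q) := h
    rw [hτφ, hτφ] at this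
    exact Subtype.ext (by rw [this])
  have hcomp : RingHom.comp (algebraMap (MvPolynomial (Fin n) k)
        (Polynomial (MvPolynomial (Fin n) k))) f
      = RingHom.comp (lastEquiv k n : MvPolynomial (Fin (n + 1)) k →+*
          Polynomial (MvPolynomial (Fin n) k)) (algebraMap φ.range _) := by
    refine RingHom.ext ?_
    rintro ⟨a, p, rfl⟩
    show Polynomial.C (τ (φ p)) = lastEquiv k n (φ p)
    rw [hτφ, lastEquiv_rename]
  have himg : (lastEquiv k n : MvPolynomial (Fin (n + 1)) k →+* _)
        (1 - X (Fin.last n) * φ g)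
      = Polynomial.C (-g) * Polynomial.X + Polynomial.C 1 := by
    show lastEquiv k n (1 - X (Fin.last n) * φ g) = _
    rw [map_sub, map_one, map_mul, lastEquiv_X_last, lastEquiv_rename, map_neg, map_one]
    ring
  have htr : Transcendental (MvPolynomial (Fin n) k)
      ((lastEquiv k n : MvPolynomial (Fin (n + 1)) k →+* Polynomial (MvPolynomial (Fin n) k))
        (1 - X (Fin.last n) * φ g)) := by
    rw [himg]
    exact Polynomial.transcendental _
      (by rw [Polynomial.natDegree_linear (neg_ne_zero.2 hg)]; exact one_ne_zero)
      (by rw [Polynomial.leadingCoeff_linear (neg_ne_zero.2 hg)]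
          exact mem_nonZeroDivisors_of_ne_zero (neg_ne_zero.2 hg))
  exact htr.of_ringHom_of_comp_eq f _ hf hcomp

lemma option_indep {ι : Type*} {x : ι → MvPolynomial (Fin n) k}
    (hx : AlgebraicIndependent k x) {g : MvPolynomial (Fin n) k} (hg : g ≠ 0) :
    AlgebraicIndependent k (fun o : Option ι =>
      o.elim (1 - X (Fin.last n) * rename (Fin.castSucc : Fin n → Fin (n + 1)) g)
        (fun i => rename (Fin.castSucc : Fin n → Fin (n + 1)) (x i))) := by
  set φ : MvPolynomial (Fin n) k →ₐ[k] MvPolynomial (Fin (n + 1)) k :=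
    rename (Fin.castSucc : Fin n → Fin (n + 1))
  have hφ : Function.Injective φ :=
    rename_injective _ (Fin.castSucc_injective n)
  have hφx : AlgebraicIndependent k (φ ∘ x) := hx.map' hφ
  rw [show (fun i => rename (Fin.castSucc : Fin n → Fin (n + 1)) (x i)) = φ ∘ x from rfl]
  rw [hφx.option_iff_transcendental]
  refine transcendental_one_sub hg _ (Algebra.adjoin_le ?_)
  rintro _ ⟨i, rfl⟩
  exact ⟨x i, rfl⟩

end Aux

/-- **Rabinowitsch trick increases transcendence degree by exactly one.**
For `f 1, ..., f m ∈ k[x_1, ..., x_n]` and a nonzero `g`, viewing everything in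
`k[x_1, ..., x_n, y]`, the transcendence degree of `{f 1, ..., f m, 1 - y*g}` over `k` is one
more than the transcendence degree of `{f 1, ..., f m}`. -/
theorem rabinowitsch_trdeg
    (k : Type*) [Field k] (n m r : ℕ)
    (f : Fin m → MvPolynomial (Fin n) k) (g : MvPolynomial (Fin n) k) (hg : g ≠ 0)
    (htrdeg :
      (∃ s : Finset (Fin m), s.card = r ∧ AlgebraicIndependent k (fun i : s => f i)) ∧
      (∀ s : Finset (Fin m), AlgebraicIndependent k (fun i : s => f i) → s.card ≤ r)) :
    let F : Fin (m + 1) → MvPolynomial (Fin (n + 1)) k :=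
      Fin.snoc (fun j : Fin m => rename (Fin.castSucc : Fin n → Fin (n + 1)) (f j))
        (1 - X (Fin.last n) * rename (Fin.castSucc : Fin n → Fin (n + 1)) g)
    (∃ s : Finset (Fin (m + 1)), s.card = r + 1 ∧
      AlgebraicIndependent k (fun i : s => F i)) ∧
    (∀ s : Finset (Fin (m + 1)),
      AlgebraicIndependent k (fun i : s => F i) → s.card ≤ r + 1) := by
  intro F
  have hFlast : F (Fin.last m) =
      1 - X (Fin.last n) * rename (Fin.castSucc : Fin n → Fin (n + 1)) g := Fin.snoc_last _ _
  have hFcast : ∀ j : Fin m, F (Fin.castSucc j) =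
      rename (Fin.castSucc : Fin n → Fin (n + 1)) (f j) := fun j => Fin.snoc_castSucc _ _ j
  constructor
  · -- existence
    obtain ⟨s₀, hcard, hind⟩ := htrdeg.1
    have H := option_indep (x := fun i : s₀ => f i) hind hg
    set emb : Fin m ↪ Fin (m + 1) := ⟨Fin.castSucc, Fin.castSucc_injective m⟩
    refine ⟨insert (Fin.last m) (s₀.map emb), ?_, ?_⟩
    · rw [Finset.card_insert_of_notMem, Finset.card_map, hcard]
      intro h
      obtain ⟨j, _, hj⟩ := Finset.mem_map.1 h
      exact (Fin.castSucc_lt_last j).ne hj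
    · set s : Finset (Fin (m + 1)) := insert (Fin.last m) (s₀.map emb)
      have mem_s : ∀ i : Fin (m + 1), i ∈ s → (h : i ≠ Fin.last m) → i.castPred h ∈ s₀ := by
        intro i hi h
        rcases Finset.mem_insert.1 hi with h' | h'
        · exact absurd h' h
        · obtain ⟨j, hj, rfl⟩ := Finset.mem_map.1 h'
          simpa [emb, Fin.castPred_castSucc] using hj
      set e : {i // i ∈ s} → Option {j // j ∈ s₀} := fun i =>
        if h : (i : Fin (m + 1)) = Fin.last m then none
        else some ⟨(i : Fin (m + 1)).castPred h, mem_s i i.2 h⟩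
      have he : Function.Injective e := by
        intro a b hab
        simp only [e] at hab
        by_cases h1 : (a : Fin (m + 1)) = Fin.last m <;>
          by_cases h2 : (b : Fin (m + 1)) = Fin.last m
        · exact Subtype.ext (h1.trans h2.symm)
        · rw [dif_pos h1, dif_neg h2] at hab; cases hab
        · rw [dif_neg h1, dif_pos h2] at hab; cases hab
        · rw [dif_neg h1, dif_neg h2] at hab
          have h3 : (a : Fin (m + 1)).castPred h1 = (b : Fin (m + 1)).castPred h2 :=
            congrArg Subtype.val (Option.some_injective _ hab)
          exact Subtype.ext (by
            rw [← Fin.castSucc_castPred (a : Fin (m + 1)) h1,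
              ← Fin.castSucc_castPred (b : Fin (m + 1)) h2, h3])
      have hcomp : (fun i : s => F i) = (fun o : Option s₀ =>
          o.elim (1 - X (Fin.last n) * rename (Fin.castSucc : Fin n → Fin (n + 1)) g)
            (fun i => rename (Fin.castSucc : Fin n → Fin (n + 1)) (f i))) ∘ e := by
        funext i
        simp only [Function.comp_apply, e]
        split_ifs with h
        · simp only [Option.elim]
          rw [show (i : Fin (m + 1)) = Fin.last m from h, hFlast]
        · simp only [Option.elim]
          conv_lhs => rw [show (i : Fin (m + 1)) = Fin.castSucc ((i : Fin (m + 1)).castPred h)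
            from (Fin.castSucc_castPred _ h).symm]
          rw [hFcast]
      rw [hcomp]
      exact H.comp e he
  · -- upper bound
    intro s hs
    set t : Finset (Fin m) := Finset.univ.filter (fun j => Fin.castSucc j ∈ s)
    have ht : AlgebraicIndependent k (fun j : t => f j) := by
      set φ : MvPolynomial (Fin n) k →ₐ[k] MvPolynomial (Fin (n + 1)) k :=
        rename (Fin.castSucc : Fin n → Fin (n + 1))
      refine AlgebraicIndependent.of_comp φ ?_
      set e : {j // j ∈ t} → {i // i ∈ s} := fun j =>
        ⟨Fin.castSucc j, (Finset.mem_filter.1 j.2).2⟩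
      have he : Function.Injective e := by
        rintro ⟨a, ha⟩ ⟨b, hb⟩ hab
        exact Subtype.ext (Fin.castSucc_injective m (congrArg Subtype.val hab))
      have : (φ ∘ fun j : t => f j) = (fun i : s => F i) ∘ e := by
        funext j
        simp only [Function.comp_apply, e]
        exact (hFcast j).symm
      rw [this]
      exact hs.comp e he
    have htr := htrdeg.2 t ht
    have hsub : s ⊆ insert (Fin.last m) (t.map ⟨Fin.castSucc, Fin.castSucc_injective m⟩) := by
      intro i hi
      by_cases h : i = Fin.last m
      · exact Finset.mem_insert.2 (Or.inl h)
      · refine Finset.mem_insert.2 (Or.inr (Finset.mem_map.2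
          ⟨i.castPred h, ?_, Fin.castSucc_castPred i h⟩))
        simp only [t, Finset.mem_filter, Finset.mem_univ, true_and]
        rw [Fin.castSucc_castPred i h]
        exact hi
    calc s.card ≤ (insert (Fin.last m) (t.map ⟨Fin.castSucc, Fin.castSucc_injective m⟩)).card :=
          Finset.card_le_card hsub
      _ ≤ (t.map ⟨Fin.castSucc, Fin.castSucc_injective m⟩).card + 1 := Finset.card_insert_le _ _
      _ = t.card + 1 := by rw [Finset.card_map]
      _ ≤ r + 1 := Nat.add_le_add_right htr 1
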